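/- Let V be a finite nonempty type, G a simple graph on V, and L : V → ZMod 3 a labeling. If every vertex v of G has at least one neighbor u with L u = L v - 1 (arithmetic in ZMod 3), then G is not acyclic, i.e., G contains a cycle. -/

import Mathlib

open SimpleGraph

/-- Walk following a chain of adjacent vertices. -/
def chainWalk {V : Type*} (G : SimpleGraph V) (a : ℕ → V)
    (h : ∀ n, G.Adj (a n) (a (n + 1))) (m : ℕ) : (k : ℕ) → G.Walk (a m) (a (m + k))
  | 0 => SimpleGraph.Walk.nil
  | (k + 1) => (chainWalk G a h m k).concat (h (m + k))

lemma chainWalk_support {V : Type*} (G : SimpleGraph V) (a : ℕ → V)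
    (h : ∀ n, G.Adj (a n) (a (n + 1))) (m k : ℕ) :
    (chainWalk G a h m k).support = (List.range (k + 1)).map (fun t => a (m + t)) := by
  induction k with
  | zero => simp [chainWalk, List.range_succ]
  | succ k ih =>
      rw [chainWalk, SimpleGraph.Walk.support_concat, ih]
      simp [List.range_succ]

lemma chainWalk_length {V : Type*} (G : SimpleGraph V) (a : ℕ → V)
    (h : ∀ n, G.Adj (a n) (a (n + 1))) (m k : ℕ) :
    (chainWalk G a h m k).length = k := by
  induction k with
  | zero => rfl
  | succ k ih => rw [chainWalk, SimpleGraph.Walk.length_concat, ih]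

theorem parent_chaining_cycle
    (V : Type*) [Fintype V] [Nonempty V] (G : SimpleGraph V) (L : V → ZMod 3)
    (hparent : ∀ v : V, ∃ u : V, G.Adj v u ∧ L u = L v - 1) :
    ¬ G.IsAcyclic := by
  intro hac
  choose f hadj hlab using hparent
  obtain ⟨v0⟩ := ‹Nonempty V›
  set a : ℕ → V := fun n => f^[n] v0 with ha
  have hstep : ∀ n, a (n + 1) = f (a n) := fun n => Function.iterate_succ_apply' f n v0
  have hAdj : ∀ n, G.Adj (a n) (a (n + 1)) := fun n => by rw [hstep]; exact hadj _
  have hL : ∀ n, L (a n) = L v0 - n := by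
    intro n; induction n with
    | zero => simp [ha]
    | succ n ih =>
        rw [hstep, hlab, ih]; push_cast; ring
  -- a repetition exists
  have hrep : ∃ n, ∃ m, m < n ∧ a m = a n := by
    obtain ⟨x, y, hxy, hax⟩ := Finite.exists_ne_map_eq_of_infinite a
    rcases lt_or_gt_of_ne hxy with h | h
    · exact ⟨y, x, h, hax⟩
    · exact ⟨x, y, h, hax.symm⟩
  classical
  obtain ⟨j, hj⟩ : ∃ j, j = Nat.find hrep := ⟨_, rfl⟩
  obtain ⟨i, hij, hia⟩ := Nat.find_spec hrep
  rw [← hj] at hij hia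
  -- injectivity below j
  have hinj : ∀ s t, s < t → t < j → a s ≠ a t := by
    intro s t hst htj hst'
    rw [hj] at htj
    exact Nat.find_min hrep htj ⟨s, hst, hst'⟩
  -- label arithmetic : j - i ≥ 3
  have hcast : ((j - i : ℕ) : ZMod 3) = 0 := by
    have h1 := hL i
    have h2 := hL j
    rw [hia, h2] at h1
    have : ((i : ℕ) : ZMod 3) = ((j : ℕ) : ZMod 3) := sub_right_injective h1.symm
    have hsub : ((j : ℕ) : ZMod 3) - ((i : ℕ) : ZMod 3) = 0 := by rw [this]; ring
    rw [← hsub]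
    push_cast [Nat.cast_sub hij.le]
    ring
  have hd3 : 3 ≤ j - i := by
    by_contra hlt
    push_neg at hlt
    interval_cases h : (j - i)
    · omega
    · exact absurd hcast (by decide)
    · exact absurd hcast (by decide)
  -- build the long path from a (i+1) to a i
  have he : i + 1 + (j - i - 1) = j := by omega
  have hend : a (i + 1 + (j - i - 1)) = a i := by rw [he]; exact hia.symm
  set q0 := chainWalk G a hAdj (i + 1) (j - i - 1) with hq0
  set q1 : G.Walk (a (i + 1)) (a i) := q0.copy rfl hend with hq1
  have hq1supp : q1.support = (List.range (j - i)).map (fun t => a (i + 1 + t)) := by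
    rw [hq1, SimpleGraph.Walk.support_copy, hq0, chainWalk_support,
      show j - i - 1 + 1 = j - i by omega]
  have hq1path : q1.IsPath := by
    rw [SimpleGraph.Walk.isPath_def, hq1supp]
    refine List.Nodup.map_on ?_ List.nodup_range
    intro x hx y hy hxy
    rw [List.mem_range] at hx hy
    by_contra hne
    wlog hlt : x < y generalizing x y
    · exact this y hy x hx hxy.symm (Ne.symm hne) (by omega)
    have hyi : i + 1 + y ≤ j := by omega
    rcases eq_or_lt_of_le hyi with hyj | hyj
    · -- a (i+1+x) = a j = a i, with i < i+1+x < j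
      have : a (i + 1 + x) = a j := by rw [← hyj]; exact hxy
      rw [← hia] at this
      exact hinj i (i + 1 + x) (by omega) (by omega) this.symm
    · exact hinj (i + 1 + x) (i + 1 + y) (by omega) hyj hxy
  have hq1len : q1.length = j - i - 1 := by
    rw [hq1, SimpleGraph.Walk.length_copy, hq0, chainWalk_length]
  -- two distinct paths from a (i+1) to a i
  have huniq := SimpleGraph.isAcyclic_iff_path_unique.mp hac
  have hP := huniq (SimpleGraph.Path.singleton (hAdj i).symm) ⟨q1, hq1path⟩
  have hlen : (SimpleGraph.Path.singleton (hAdj i).symm).val.length = q1.length := by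
    rw [hP]
  rw [hq1len] at hlen
  simp [SimpleGraph.Path.singleton] at hlen
  omega
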